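/- Let F : ℝ^n → ℝ be differentiable with (H_F, ν)-Hölder continuous gradient on closed convex X, ν ∈ (0,1], x* = argmin_{u∈X} F(u), and suppose x ∈ X satisfies F(x) − F(x*) ≤ ε for some ε > 0. With γ = (1/H_F)ε^{(1−ν)/(1+ν)} and x⁺ = argmin_{u∈X} ⟨∇F(x), u−x⟩ + (1/(2γ))‖u−x‖², it holds that dist(−∇F(x⁺), N_X(x⁺)) ≤ (H_F^{1−ν}(2H_F(1+H_F))^{ν/2} + (2H_F(1+H_F))^{1/2})·ε^{ν/(1+ν)}. -/

import Mathlib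

open scoped RealInnerProductSpace
open Filter

private lemma contOn_of_holder {α β : Type*} [PseudoMetricSpace α] [PseudoMetricSpace β]
    {f : α → β} {S : Set α} {C ν : ℝ} (hν : 0 < ν)
    (h : ∀ a ∈ S, ∀ b ∈ S, dist (f a) (f b) ≤ C * dist a b ^ ν) :
    ContinuousOn f S := by
  intro a ha
  have hdist : Tendsto (fun b => dist b a) (nhdsWithin a S) (nhds 0) := by
    have : Continuous fun b : α => dist b a := continuous_id.dist continuous_const
    have := this.continuousAt (x := a)
    rw [ContinuousAt, dist_self] at this
    exact this.mono_left nhdsWithin_le_nhds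
  have hc : ContinuousAt (fun t : ℝ => C * t ^ ν) 0 :=
    continuousAt_const.mul (Real.continuousAt_rpow_const 0 ν (Or.inr hν.le))
  have h1 : Tendsto (fun b => C * dist b a ^ ν) (nhdsWithin a S) (nhds 0) := by
    have h2 := hc.tendsto.comp hdist
    simp only [Function.comp_def] at h2
    rw [show C * (0:ℝ) ^ ν = 0 by simp [Real.zero_rpow hν.ne']] at h2
    exact h2
  rw [ContinuousWithinAt, tendsto_iff_dist_tendsto_zero]
  refine squeeze_zero' (Filter.Eventually.of_forall fun b => dist_nonneg) ?_ h1
  exact Filter.eventually_of_mem self_mem_nhdsWithin fun b hb => h b hb a ha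

set_option maxHeartbeats 1000000 in
theorem stmt_14 (n : ℕ) (X : Set (EuclideanSpace ℝ (Fin n)))
    (hXc : Convex ℝ X) (hXcl : IsClosed X)
    (F : EuclideanSpace ℝ (Fin n) → ℝ) (g : EuclideanSpace ℝ (Fin n) → EuclideanSpace ℝ (Fin n))
    (HF ν ε : ℝ) (hHF : 0 < HF) (hν : ν ∈ Set.Ioc (0 : ℝ) 1) (hε : 0 < ε)
    (hgrad : ∀ x ∈ X, HasGradientAt F (g x) x)
    (hhold : ∀ x ∈ X, ∀ x' ∈ X, ‖g x' - g x‖ ≤ HF * ‖x' - x‖ ^ ν)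
    (xstar : EuclideanSpace ℝ (Fin n)) (hxstar : xstar ∈ X)
    (hxstarmin : ∀ u ∈ X, F xstar ≤ F u)
    (γ : ℝ) (hγ : γ = (1 / HF) * ε ^ ((1 - ν) / (1 + ν)))
    (x xp : EuclideanSpace ℝ (Fin n)) (hx : x ∈ X) (hxp : xp ∈ X)
    (hsub : F x - F xstar ≤ ε)
    (hmin : ∀ u ∈ X,
      ⟪g x, xp - x⟫ + (1 / (2 * γ)) * ‖xp - x‖ ^ 2 ≤
        ⟪g x, u - x⟫ + (1 / (2 * γ)) * ‖u - x‖ ^ 2) :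
    Metric.infDist (-(g xp)) {v | ∀ y ∈ X, ⟪v, y - xp⟫ ≤ 0} ≤
      (HF ^ (1 - ν) * (2 * HF * (1 + HF)) ^ (ν / 2) + (2 * HF * (1 + HF)) ^ ((1 : ℝ) / 2))
        * ε ^ (ν / (1 + ν)) := by
  obtain ⟨hν0, hν1⟩ := hν
  have hν1' : (0:ℝ) < 1 + ν := by linarith
  have hγpos : 0 < γ := by rw [hγ]; positivity
  have hγinvpos : 0 < γ⁻¹ := inv_pos.mpr hγpos
  -- variational inequality from `hmin`
  have hVI : ∀ u ∈ X, 0 ≤ ⟪g x, u - xp⟫ + γ⁻¹ * ⟪xp - x, u - xp⟫ := by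
    intro u hu
    set A := ⟪g x, u - xp⟫ + γ⁻¹ * ⟪xp - x, u - xp⟫ with hA
    have key : ∀ t : ℝ, 0 < t → t ≤ 1 → -(t * ((1/(2*γ)) * ‖u - xp‖^2)) ≤ A := by
      intro t ht0 ht1
      have hut : xp + t • (u - xp) ∈ X := by
        have h1 : (1 - t) • xp + t • u = xp + t • (u - xp) := by module
        rw [← h1]
        exact hXc hxp hu (by linarith) ht0.le (by ring)
      have h2 := hmin _ hut
      have expand1 : ⟪g x, xp + t • (u - xp) - x⟫ = ⟪g x, xp - x⟫ + t * ⟪g x, u - xp⟫ := by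
        rw [add_sub_right_comm, inner_add_right, real_inner_smul_right]
      have expand2 : ‖xp + t • (u - xp) - x‖^2
          = ‖xp - x‖^2 + 2*(t*⟪xp - x, u - xp⟫) + t^2*‖u - xp‖^2 := by
        rw [add_sub_right_comm, norm_add_sq_real, real_inner_smul_right, norm_smul, mul_pow,
          Real.norm_eq_abs, sq_abs]
      rw [expand1, expand2] at h2
      have hc2 : γ⁻¹ = 2 * (1/(2*γ)) := by field_simp
      have h3 : 0 ≤ t * (A + t * ((1/(2*γ)) * ‖u - xp‖^2)) := by
        rw [hA, hc2]; nlinarith [h2]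
      have h4 : 0 ≤ A + t * ((1/(2*γ)) * ‖u - xp‖^2) := by
        nlinarith [h3, ht0]
      nlinarith [h4, ht0]
    by_contra hAneg
    push_neg at hAneg
    set K := (1/(2*γ)) * ‖u - xp‖^2 with hK
    have hK0 : (0:ℝ) ≤ K := by positivity
    rcases eq_or_lt_of_le hK0 with hKz | hKpos
    · have := key 1 one_pos le_rfl
      rw [← hKz] at this
      simp at this
      linarith
    · set t := min 1 (-A/(2*K)) with htdef
      have ht0 : 0 < t := lt_min one_pos (div_pos (by linarith) (by linarith))
      have ht1 : t ≤ 1 := min_le_left _ _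
      have h5 := key t ht0 ht1
      have h6 : t * K ≤ (-A/(2*K)) * K := mul_le_mul_of_nonneg_right (min_le_right _ _) hK0
      have h7 : (-A/(2*K)) * K = -A/2 := by field_simp
      rw [h7] at h6
      clear_value A K t
      linarith [h5, h6, hAneg]
  have hRHSpos : (0:ℝ) ≤ (HF ^ (1 - ν) * (2 * HF * (1 + HF)) ^ (ν / 2)
      + (2 * HF * (1 + HF)) ^ ((1 : ℝ) / 2)) * ε ^ (ν / (1 + ν)) := by positivity
  by_cases hne : xp = x
  · -- trivial case `xp = x`
    have hvN : -(g x) ∈ {v : EuclideanSpace ℝ (Fin n) | ∀ y ∈ X, ⟪v, y - xp⟫ ≤ 0} := by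
      intro y hy
      have h := hVI y hy
      have h0 : xp - x = 0 := by rw [hne, sub_self]
      rw [h0, inner_zero_left, mul_zero, add_zero] at h
      rw [inner_neg_left]
      linarith
    have h1 := Metric.infDist_le_dist_of_mem (x := -(g xp)) hvN
    have h2 : dist (-(g xp)) (-(g x)) = 0 := by rw [hne, dist_self]
    linarith
  · -- main case
    set d : EuclideanSpace ℝ (Fin n) := xp - x with hd
    have hdpos : 0 < ‖d‖ := by rw [hd]; exact norm_sub_pos_iff.mpr hne
    -- descent lemma along the segment
    have hdesc : F xp ≤ F x + ⟪g x, d⟫ + HF/(1+ν) * ‖d‖ ^ (1+ν) := by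
      set c : ℝ → EuclideanSpace ℝ (Fin n) := fun t => x + t • d with hc
      have hcX : ∀ t ∈ Set.Icc (0:ℝ) 1, c t ∈ X := by
        intro t ht
        have h1 : (1 - t) • x + t • xp = c t := by rw [hc, hd]; module
        rw [← h1]
        exact hXc hx hxp (by linarith [ht.2]) ht.1 (by ring)
      have huIcc : Set.uIcc (0:ℝ) 1 = Set.Icc 0 1 := Set.uIcc_of_le zero_le_one
      have hderiv : ∀ t ∈ Set.uIcc (0:ℝ) 1,
          HasDerivAt (fun s => F (c s)) ⟪g (c t), d⟫ t := by
        intro t ht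
        rw [huIcc] at ht
        have hct : c t ∈ X := hcX t ht
        have h1 : HasDerivAt c d t := by
          have h2 : HasDerivAt (fun s : ℝ => s • d) ((1:ℝ) • d) t :=
            (hasDerivAt_id t).smul_const d
          rw [one_smul] at h2
          exact h2.const_add x
        have h3 := (hgrad (c t) hct).hasFDerivAt
        have h4 := h3.comp_hasDerivAt t h1
        have h5 : (InnerProductSpace.toDual ℝ (EuclideanSpace ℝ (Fin n)) (g (c t))) d
            = ⟪g (c t), d⟫ := rfl
        rw [h5] at h4
        exact h4
      have hgcont : ContinuousOn (fun t => g (c t)) (Set.Icc (0:ℝ) 1) := by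
        apply contOn_of_holder (C := HF * ‖d‖ ^ ν) hν0
        intro a ha b hb
        have h1 : dist (g (c a)) (g (c b)) = ‖g (c a) - g (c b)‖ := dist_eq_norm _ _
        have h2 : ‖g (c a) - g (c b)‖ ≤ HF * ‖c a - c b‖ ^ ν :=
          hhold (c b) (hcX b hb) (c a) (hcX a ha)
        have h3 : ‖c a - c b‖ = dist a b * ‖d‖ := by
          rw [hc]
          have : x + a • d - (x + b • d) = (a - b) • d := by module
          rw [this, norm_smul, Real.norm_eq_abs, Real.dist_eq]
        rw [h1]
        calc ‖g (c a) - g (c b)‖ ≤ HF * ‖c a - c b‖ ^ ν := h2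
          _ = HF * (dist a b * ‖d‖) ^ ν := by rw [h3]
          _ = HF * ‖d‖ ^ ν * dist a b ^ ν := by
              rw [Real.mul_rpow dist_nonneg (norm_nonneg d)]; ring
      have hcont1 : ContinuousOn (fun t => ⟪g (c t), d⟫) (Set.uIcc (0:ℝ) 1) := by
        rw [huIcc]
        exact hgcont.inner continuousOn_const
      have hint1 : IntervalIntegrable (fun t => ⟪g (c t), d⟫) MeasureTheory.volume 0 1 :=
        hcont1.intervalIntegrable
      have hFTC : ∫ t in (0:ℝ)..1, ⟪g (c t), d⟫ = F (c 1) - F (c 0) :=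
        intervalIntegral.integral_eq_sub_of_hasDerivAt hderiv hint1
      have hrpow_cont : Continuous (fun t : ℝ => t ^ ν) :=
        continuous_iff_continuousAt.mpr fun t => Real.continuousAt_rpow_const t ν (Or.inr hν0.le)
      have hcont2 : Continuous (fun t : ℝ => ⟪g x, d⟫ + HF * ‖d‖ ^ (1+ν) * t ^ ν) :=
        continuous_const.add (continuous_const.mul hrpow_cont)
      have hint2 : IntervalIntegrable (fun t : ℝ => ⟪g x, d⟫ + HF * ‖d‖ ^ (1+ν) * t ^ ν)
          MeasureTheory.volume 0 1 := hcont2.intervalIntegrable 0 1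
      have hptwise : ∀ t ∈ Set.Icc (0:ℝ) 1,
          ⟪g (c t), d⟫ ≤ ⟪g x, d⟫ + HF * ‖d‖ ^ (1+ν) * t ^ ν := by
        intro t ht
        have hct : c t ∈ X := hcX t ht
        have h1 : ⟪g (c t) - g x, d⟫ ≤ ‖g (c t) - g x‖ * ‖d‖ := real_inner_le_norm _ _
        have h2 : ‖g (c t) - g x‖ ≤ HF * ‖c t - x‖ ^ ν := hhold x hx (c t) hct
        have h3 : ‖c t - x‖ = t * ‖d‖ := by
          rw [hc]
          have : x + t • d - x = t • d := by module
          rw [this, norm_smul, Real.norm_eq_abs, abs_of_nonneg ht.1]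
        have h4 : HF * ‖c t - x‖ ^ ν * ‖d‖ = HF * ‖d‖ ^ (1+ν) * t ^ ν := by
          rw [h3, Real.mul_rpow ht.1 (norm_nonneg d)]
          rw [show (1+ν) = ν + 1 by ring, Real.rpow_add_one hdpos.ne']
          ring
        have h5 : ⟪g (c t), d⟫ = ⟪g x, d⟫ + ⟪g (c t) - g x, d⟫ := by
          rw [inner_sub_left]; ring
        have h6 : ‖g (c t) - g x‖ * ‖d‖ ≤ HF * ‖c t - x‖ ^ ν * ‖d‖ :=
          mul_le_mul_of_nonneg_right h2 (norm_nonneg d)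
        rw [h5]
        rw [h4] at h6
        linarith
      have hmono := intervalIntegral.integral_mono_on zero_le_one hint1 hint2 hptwise
      have hval : (∫ t in (0:ℝ)..1, (⟪g x, d⟫ + HF * ‖d‖ ^ (1+ν) * t ^ ν))
          = ⟪g x, d⟫ + HF/(1+ν) * ‖d‖ ^ (1+ν) := by
        rw [intervalIntegral.integral_add (f := fun _ : ℝ => ⟪g x, d⟫)
          (g := fun t : ℝ => HF * ‖d‖ ^ (1+ν) * t ^ ν) (intervalIntegrable_const)
          ((continuous_const.mul hrpow_cont).intervalIntegrable _ _),
          intervalIntegral.integral_const_mul, integral_rpow (Or.inl (by linarith : (-1:ℝ) < ν))]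
        simp [Real.zero_rpow (show ν + 1 ≠ 0 by linarith)]
        ring
      have hc1 : c 1 = xp := by rw [hc, hd]; module
      have hc0 : c 0 = x := by rw [hc]; module
      rw [hc1, hc0] at hFTC
      rw [hval] at hmono
      linarith [hmono, hFTC.symm.le]
    -- gradient-step inequality at `u = x`
    have ha : ⟪g x, d⟫ ≤ -(γ⁻¹ * ‖d‖^2) := by
      have h := hVI x hx
      rw [show x - xp = -(xp - x) from (neg_sub xp x).symm, ← hd, inner_neg_right,
        inner_neg_right, real_inner_self_eq_norm_sq] at h
      linarith
    have hkey : γ⁻¹ * ‖d‖^2 ≤ ε + HF/(1+ν) * ‖d‖ ^ (1+ν) := by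
      linarith [hdesc, ha, hsub, hxstarmin xp hxp]
    -- bound on ‖d‖ via AM-GM
    set P := ε ^ ((ν-1)/(1+ν)) with hP
    have hPpos : 0 < P := Real.rpow_pos_of_pos hε _
    have hγinv : γ⁻¹ = HF * P := by
      rw [hγ, mul_inv, one_div, inv_inv, ← Real.rpow_neg hε.le, hP]
      congr 2
      ring
    have hD2 : (‖d‖^2 : ℝ) = ‖d‖ ^ (2:ℝ) := by
      rw [← Real.rpow_natCast ‖d‖ 2]; norm_num
    have e1 : (‖d‖^2 * P)^((1+ν)/2) = ‖d‖^(1+ν) * ε^((ν-1)/2) := by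
      rw [hD2, hP, Real.mul_rpow (by positivity) (by positivity),
          ← Real.rpow_mul (norm_nonneg d), ← Real.rpow_mul hε.le]
      congr 2
      · ring
      · field_simp
    have e2 : ε^((ν-1)/2) * ε^((1-ν)/2) = 1 := by
      rw [← Real.rpow_add hε, show (ν-1)/2 + (1-ν)/2 = 0 by ring, Real.rpow_zero]
    have hamgm : ‖d‖^(1+ν) ≤ (1+ν)/2 * (‖d‖^2 * P) + (1-ν)/2 * ε := by
      have h := Real.geom_mean_le_arith_mean2_weighted
        (by linarith : (0:ℝ) ≤ (1+ν)/2) (by linarith : (0:ℝ) ≤ (1-ν)/2)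
        (by positivity : (0:ℝ) ≤ ‖d‖^2 * P) hε.le (by ring)
      calc ‖d‖^(1+ν) = ‖d‖^(1+ν) * (ε^((ν-1)/2) * ε^((1-ν)/2)) := by rw [e2, mul_one]
        _ = (‖d‖^2*P)^((1+ν)/2) * ε^((1-ν)/2) := by rw [e1]; ring
        _ ≤ (1+ν)/2 * (‖d‖^2*P) + (1-ν)/2 * ε := h
    have hkey2 : HF * P * ‖d‖^2 ≤ ε + HF/(1+ν) * ‖d‖^(1+ν) := by
      rw [← hγinv]; exact hkey
    have hmul : HF/(1+ν) * ‖d‖^(1+ν) ≤ HF/2*(‖d‖^2*P) + HF*(1-ν)/(2*(1+ν))*ε := by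
      have h := mul_le_mul_of_nonneg_left hamgm (by positivity : (0:ℝ) ≤ HF/(1+ν))
      calc HF/(1+ν) * ‖d‖^(1+ν) ≤ HF/(1+ν) * ((1+ν)/2*(‖d‖^2*P) + (1-ν)/2*ε) := h
        _ = HF/2*(‖d‖^2*P) + HF*(1-ν)/(2*(1+ν))*ε := by field_simp
    have h9 : HF*(1-ν)/(2*(1+ν))*ε ≤ HF*ε := by
      apply mul_le_mul_of_nonneg_right _ hε.le
      rw [div_le_iff₀ (by linarith : (0:ℝ) < 2*(1+ν))]
      nlinarith
    have hhalf : HF/2*(P*‖d‖^2) ≤ (1+HF)*ε := by nlinarith [hkey2, hmul, h9]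
    have hPe : P * ε^(2/(1+ν)) = ε := by
      rw [hP, ← Real.rpow_add hε, show (ν-1)/(1+ν) + 2/(1+ν) = 1 by field_simp; ring, Real.rpow_one]
    have hd2 : ‖d‖^2 ≤ 2*(1+HF)/HF * ε^(2/(1+ν)) := by
      have hpos : (0:ℝ) < HF/2*P := by positivity
      have heq : HF/2*P*(2*(1+HF)/HF*ε^(2/(1+ν))) = (1+HF)*(P*ε^(2/(1+ν))) := by
        field_simp
      have h10 : HF/2*P*‖d‖^2 ≤ HF/2*P*(2*(1+HF)/HF*ε^(2/(1+ν))) := by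
        rw [heq, hPe]; linarith [hhalf]
      exact le_of_mul_le_mul_left h10 hpos
    have hdr : ‖d‖ ≤ (2*(1+HF)/HF)^((1:ℝ)/2) * ε^(1/(1+ν)) := by
      have h := Real.sqrt_le_sqrt hd2
      rw [Real.sqrt_sq (norm_nonneg d), Real.sqrt_mul (by positivity) _,
        Real.sqrt_eq_rpow, Real.sqrt_eq_rpow, ← Real.rpow_mul hε.le,
        show 2/(1+ν)*((1:ℝ)/2) = 1/(1+ν) by ring] at h
      exact h
    -- coefficient identity
    have hco : ∀ μ : ℝ, HF * (2*(1+HF)/HF)^(μ/2) = HF^(1-μ) * (2*HF*(1+HF))^(μ/2) := by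
      intro μ
      have hb : (0:ℝ) < 2*HF*(1+HF) := by positivity
      rw [show 2*(1+HF)/HF = (2*HF*(1+HF)) * ((HF^(2:ℕ) : ℝ))⁻¹ by field_simp]
      rw [Real.mul_rpow hb.le (by positivity), Real.inv_rpow (by positivity),
          ← Real.rpow_natCast HF 2, ← Real.rpow_mul hHF.le, ← Real.rpow_neg hHF.le,
          Real.rpow_sub hHF, Real.rpow_one]
      rw [show ((2:ℕ):ℝ) * (μ/2) = μ by push_cast; ring]
      have hμpos : (0:ℝ) < HF^μ := Real.rpow_pos_of_pos hHF μ
      rw [Real.rpow_neg hHF.le]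
      field_simp
    -- membership of the normal-cone element
    have hvN : -(g x) - γ⁻¹ • d ∈ {v : EuclideanSpace ℝ (Fin n) | ∀ y ∈ X, ⟪v, y - xp⟫ ≤ 0} := by
      intro y hy
      have h := hVI y hy
      have e : ⟪-(g x) - γ⁻¹ • d, y - xp⟫ = -(⟪g x, y - xp⟫ + γ⁻¹ * ⟪xp - x, y - xp⟫) := by
        rw [inner_sub_left, inner_neg_left, real_inner_smul_left, ← hd]; ring
      rw [e]; linarith
    have h1 := Metric.infDist_le_dist_of_mem (x := -(g xp)) hvN
    have h2 : dist (-(g xp)) (-(g x) - γ⁻¹ • d) ≤ HF * ‖d‖^ν + γ⁻¹ * ‖d‖ := by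
      rw [dist_eq_norm, show -(g xp) - (-(g x) - γ⁻¹ • d) = (g x - g xp) + γ⁻¹ • d by module]
      refine le_trans (norm_add_le _ _) ?_
      have hgg : ‖g x - g xp‖ ≤ HF * ‖d‖^ν := by
        rw [norm_sub_rev, hd]; exact hhold x hx xp hxp
      have hsm : ‖γ⁻¹ • d‖ = γ⁻¹ * ‖d‖ := by
        rw [norm_smul, Real.norm_eq_abs, abs_of_pos hγinvpos]
      linarith
    have hr : ‖d‖^ν ≤ (2*(1+HF)/HF)^(ν/2) * ε^(ν/(1+ν)) := by
      have h := Real.rpow_le_rpow (norm_nonneg d) hdr hν0.le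
      rw [Real.mul_rpow (by positivity) (by positivity), ← Real.rpow_mul (by positivity),
          ← Real.rpow_mul hε.le,
          show (1:ℝ)/2*ν = ν/2 by ring, show 1/(1+ν)*ν = ν/(1+ν) by ring] at h
      exact h
    have h3 : HF * ‖d‖^ν ≤ HF^(1-ν) * (2*HF*(1+HF))^(ν/2) * ε^(ν/(1+ν)) := by
      have h := mul_le_mul_of_nonneg_left hr hHF.le
      rw [show HF * ((2*(1+HF)/HF)^(ν/2) * ε^(ν/(1+ν)))
          = HF * (2*(1+HF)/HF)^(ν/2) * ε^(ν/(1+ν)) by ring, hco ν] at h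
      exact h
    have hPe2 : P * ε^(1/(1+ν)) = ε^(ν/(1+ν)) := by
      rw [hP, ← Real.rpow_add hε]
      congr 1
      field_simp
      ring
    have h4 : γ⁻¹ * ‖d‖ ≤ (2*HF*(1+HF))^((1:ℝ)/2) * ε^(ν/(1+ν)) := by
      have h5 := mul_le_mul_of_nonneg_left hdr hγinvpos.le
      calc γ⁻¹ * ‖d‖ ≤ γ⁻¹ * ((2*(1+HF)/HF)^((1:ℝ)/2) * ε^(1/(1+ν))) := h5
        _ = (HF * (2*(1+HF)/HF)^((1:ℝ)/2)) * (P * ε^(1/(1+ν))) := by rw [hγinv]; ring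
        _ = (2*HF*(1+HF))^((1:ℝ)/2) * ε^(ν/(1+ν)) := by
            rw [hPe2, hco 1, show (1:ℝ)-1 = 0 by ring, Real.rpow_zero, one_mul]
    calc Metric.infDist (-(g xp)) {v : EuclideanSpace ℝ (Fin n) | ∀ y ∈ X, ⟪v, y - xp⟫ ≤ 0}
        ≤ dist (-(g xp)) (-(g x) - γ⁻¹ • d) := h1
      _ ≤ HF * ‖d‖^ν + γ⁻¹ * ‖d‖ := h2
      _ ≤ HF^(1-ν) * (2*HF*(1+HF))^(ν/2) * ε^(ν/(1+ν))
          + (2*HF*(1+HF))^((1:ℝ)/2) * ε^(ν/(1+ν)) := by linarith [h3, h4]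
      _ = (HF^(1-ν) * (2*HF*(1+HF))^(ν/2) + (2*HF*(1+HF))^((1:ℝ)/2)) * ε^(ν/(1+ν)) := by
          ring
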